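/- Let F be a field, let n ≥ 2, and let a₁, …, a_n, u₂, …, u_n ∈ F. Consider the n×n matrix A over the polynomial ring F[x] whose first row is (a₁ + x, a₂, a₃, …, a_{n-1}, a_n); whose i-th row, for 2 ≤ i ≤ n−1, has x in position (i,i), u_i in position (i,n), and zeros elsewhere; and whose last row has x in position (n,1), x + u_n in position (n,n), and zeros elsewhere. Then det(A) = xⁿ + u_n x^{n-1} + (a₁ − a_n)x^{n-1} + a₁u_n x^{n-2} + (Σ_{i=2}^{n-1} a_i u_i) x^{n-2}. -/

import Mathlib

open Polynomial Matrix

open Finset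
attribute [-simp] Fin.val_eq_zero_iff
lemma det_updateRow_add_sum {K : Type*} [CommRing K] {n : ℕ}
    (A : Matrix (Fin n) (Fin n) K) (r : Fin n) (s : Finset (Fin n)) (c : Fin n → K)
    (hr : r ∉ s) :
    (A.updateRow r (A r + ∑ i ∈ s, c i • A i)).det = A.det := by
  induction s using Finset.induction_on with
  | empty => simp
  | @insert j s' hj ih =>
    have hrj : r ≠ j := fun h => hr (h ▸ Finset.mem_insert_self j s')
    have hrs' : r ∉ s' := fun h => hr (Finset.mem_insert_of_mem h)
    rw [Finset.sum_insert hj]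
    set B := A.updateRow r (A r + ∑ i ∈ s', c i • A i) with hB
    have h1 : A.updateRow r (A r + (c j • A j + ∑ i ∈ s', c i • A i))
        = B.updateRow r (B r + c j • B j) := by
      ext i k
      by_cases hi : i = r
      · subst hi
        simp only [Matrix.updateRow_self, hB, Matrix.updateRow_ne hrj.symm,
          Pi.add_apply, Pi.smul_apply, smul_eq_mul, Finset.sum_apply]
        ring
      · simp [hB, Matrix.updateRow_ne hi]
    rw [h1, Matrix.det_updateRow_add_smul_self B hrj (c j), hB, ih hrs']

lemma det_updateCol_add_sum {K : Type*} [CommRing K] {n : ℕ}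
    (A : Matrix (Fin n) (Fin n) K) (r : Fin n) (s : Finset (Fin n)) (c : Fin n → K)
    (hr : r ∉ s) :
    (A.updateCol r (fun k => A k r + ∑ i ∈ s, c i • A k i)).det = A.det := by
  have h := det_updateRow_add_sum Aᵀ r s c hr
  have h2 : (A.updateCol r (fun k => A k r + ∑ i ∈ s, c i • A k i))ᵀ
      = Aᵀ.updateRow r (Aᵀ r + ∑ i ∈ s, c i • Aᵀ i) := by
    ext i j
    by_cases hi : i = r
    · subst hi
      simp [Matrix.updateRow_self, Matrix.updateCol_self, Matrix.transpose_apply,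
        Finset.sum_apply]
    · simp [Matrix.updateRow_ne hi, Matrix.updateCol_ne hi, Matrix.transpose_apply]
  rw [← Matrix.det_transpose, h2, h, Matrix.det_transpose]

lemma det_aux {K : Type*} [Field K] (m : ℕ) (t : K) (b v : Fin (m + 2) → K)
    (z e : Fin (m + 2)) (hz : (z : ℕ) = 0) (he : (e : ℕ) = m + 1)
    (ht : t ≠ 0) (hbt : b z + t ≠ 0) :
    (Matrix.of fun i j : Fin (m + 2) =>
       if (i : ℕ) = 0 then (if (j : ℕ) = 0 then b z + t else b j)
       else if (i : ℕ) = m + 1 then (if (j : ℕ) = 0 then t else if j = i then t + v e else 0)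
       else (if j = i then t else if (j : ℕ) = m + 1 then v i else 0)).det
    = t ^ (m + 2) + v e * t ^ (m + 1) + (b z - b e) * t ^ (m + 1)
      + b z * v e * t ^ m
      + (∑ i ∈ Finset.univ.filter (fun i : Fin (m + 2) => (i : ℕ) ≠ 0 ∧ (i : ℕ) ≠ m + 1),
          b i * v i) * t ^ m := by
  classical
  set S : Finset (Fin (m + 2)) :=
    Finset.univ.filter (fun i : Fin (m + 2) => (i : ℕ) ≠ 0 ∧ (i : ℕ) ≠ m + 1) with hS
  have hmem : ∀ i : Fin (m + 2), i ∈ S ↔ (i : ℕ) ≠ 0 ∧ (i : ℕ) ≠ m + 1 := by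
    intro i; simp [hS]
  have hzS : z ∉ S := by simp [hmem, hz]
  have heS : e ∉ S := by simp [hmem, he]
  have hze : z ≠ e := by intro h; rw [h, he] at hz; omega
  have hez0 : ¬(e : ℕ) = 0 := by omega
  have hz1 : ¬(z : ℕ) = m + 1 := by omega
  set Sm : K := ∑ i ∈ S, b i * v i with hSm
  set M0 : Matrix (Fin (m + 2)) (Fin (m + 2)) K := Matrix.of fun i j =>
       if (i : ℕ) = 0 then (if (j : ℕ) = 0 then b z + t else b j)
       else if (i : ℕ) = m + 1 then (if (j : ℕ) = 0 then t else if j = i then t + v e else 0)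
       else (if j = i then t else if (j : ℕ) = m + 1 then v i else 0) with hM0
  set M1 : Matrix (Fin (m + 2)) (Fin (m + 2)) K := Matrix.of fun i j =>
       if (i : ℕ) = 0 then
         (if (j : ℕ) = 0 then b z + t else if (j : ℕ) = m + 1 then b e - Sm / t else 0)
       else M0 i j with hM1
  set M2 : Matrix (Fin (m + 2)) (Fin (m + 2)) K := Matrix.of fun i j =>
       if (j : ℕ) = m + 1 then
         (if (i : ℕ) = 0 then b e - Sm / t else if (i : ℕ) = m + 1 then t + v e else 0)
       else M1 i j with hM2
  set D : K := (t + v e) + (-(t / (b z + t))) * (b e - Sm / t) with hD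
  set M3 : Matrix (Fin (m + 2)) (Fin (m + 2)) K := Matrix.of fun i j =>
       if (i : ℕ) = m + 1 then (if j = i then D else 0)
       else M2 i j with hM3
  have hM0row : ∀ i ∈ S, ∀ j, M0 i j =
      if j = i then t else if (j : ℕ) = m + 1 then v i else 0 := by
    intro i hi j
    rw [hmem] at hi
    simp [hM0, hi.1, hi.2]
  have hsum : ∀ j, (∑ i ∈ S, (-(b i) / t) • M0 i) j =
      if (j : ℕ) = 0 then 0 else if (j : ℕ) = m + 1 then -(Sm / t) else -(b j) := by
    intro j
    simp only [Finset.sum_apply, Pi.smul_apply, smul_eq_mul]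
    by_cases hj0 : (j : ℕ) = 0
    · rw [if_pos hj0, Finset.sum_eq_zero]
      intro i hi
      have hji : ¬ j = i := fun h => ((hmem i).1 hi).1 (h ▸ hj0)
      have hjm : ¬(j : ℕ) = m + 1 := by omega
      simp [hM0row i hi j, hji, hjm]
    · by_cases hjm : (j : ℕ) = m + 1
      · rw [if_neg hj0, if_pos hjm]
        have hcongr : ∀ i ∈ S, -(b i) / t * M0 i j = -(b i * v i / t) := by
          intro i hi
          have hji : ¬ j = i := fun h => ((hmem i).1 hi).2 (h ▸ hjm)
          rw [hM0row i hi j, if_neg hji, if_pos hjm]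
          ring
        rw [Finset.sum_congr rfl hcongr, Finset.sum_neg_distrib, ← Finset.sum_div, ← hSm]
      · have hjS : j ∈ S := (hmem j).2 ⟨hj0, hjm⟩
        rw [if_neg hj0, if_neg hjm, Finset.sum_eq_single_of_mem j hjS]
        · rw [hM0row j hjS j, if_pos rfl, div_mul_cancel₀ _ ht]
        · intro i hi hij
          have hji : ¬ j = i := fun h => hij h.symm
          simp [hM0row i hi j, hji, hjm]
  have step1 : M1 = M0.updateRow z (M0 z + ∑ i ∈ S, (-(b i) / t) • M0 i) := by
    ext i j
    by_cases hi : i = z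
    · rw [hi, Matrix.updateRow_self, Pi.add_apply, hsum j]
      have hL : M1 z j = if (j : ℕ) = 0 then b z + t
          else if (j : ℕ) = m + 1 then b e - Sm / t else 0 := by simp [hM1, hz]
      have hR : M0 z j = if (j : ℕ) = 0 then b z + t else b j := by simp [hM0, hz]
      rw [hL, hR]
      by_cases hj0 : (j : ℕ) = 0
      · simp only [if_pos hj0, add_zero]
      · by_cases hjm : (j : ℕ) = m + 1
        · have hje : j = e := Fin.ext (by rw [hjm, he])
          simp only [if_neg hj0, if_pos hjm]
          rw [hje]
          ring
        · simp only [if_neg hj0, if_neg hjm]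
          ring
    · have hi0 : ¬(i : ℕ) = 0 := fun h => hi (Fin.ext (by rw [h, hz]))
      rw [Matrix.updateRow_ne hi]
      simp [hM1, hi0]
  have hsum2 : ∀ k, (∑ i ∈ S, (-(v i) / t) * M1 k i) =
      if (k : ℕ) = 0 then 0 else if (k : ℕ) = m + 1 then 0 else -(v k) := by
    intro k
    by_cases hk0 : (k : ℕ) = 0
    · rw [if_pos hk0, Finset.sum_eq_zero]
      intro i hi
      have hi' := (hmem i).1 hi
      simp [hM1, hk0, hi'.1, hi'.2]
    · by_cases hkm : (k : ℕ) = m + 1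
      · rw [if_neg hk0, if_pos hkm, Finset.sum_eq_zero]
        intro i hi
        have hi' := (hmem i).1 hi
        have hik : ¬ i = k := fun h => hi'.2 (by rw [h, hkm])
        simp [hM1, hM0, hk0, hkm, hi'.1, hik]
      · have hkS : k ∈ S := (hmem k).2 ⟨hk0, hkm⟩
        rw [if_neg hk0, if_neg hkm, Finset.sum_eq_single_of_mem k hkS]
        · have : M1 k k = t := by simp [hM1, hM0, hk0, hkm]
          rw [this, div_mul_cancel₀ _ ht]
        · intro i hi hik
          have hi' := (hmem i).1 hi
          simp [hM1, hM0, hk0, hkm, hik, hi'.2]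
  have hM1cole : ∀ k, M1 k e =
      if (k : ℕ) = 0 then b e - Sm / t else if (k : ℕ) = m + 1 then t + v e else v k := by
    intro k
    by_cases hk0 : (k : ℕ) = 0
    · simp [hM1, hk0, hez0, he]
    · by_cases hkm : (k : ℕ) = m + 1
      · have hek : e = k := Fin.ext (by omega)
        simp [hM1, hM0, hk0, hkm, hez0, hek]
      · have hek : ¬ e = k := fun h => hkm (by rw [← h, he])
        simp [hM1, hM0, hk0, hkm, hek, he]
  have step2 : M2 = M1.updateCol e (fun k => M1 k e + ∑ i ∈ S, (-(v i) / t) • M1 k i) := by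
    ext i j
    by_cases hj : j = e
    · rw [hj, Matrix.updateCol_self]
      simp only [smul_eq_mul]
      rw [hsum2 i, hM1cole i]
      have hL : M2 i e = if (i : ℕ) = 0 then b e - Sm / t
          else if (i : ℕ) = m + 1 then t + v e else 0 := by simp [hM2, he]
      rw [hL]
      by_cases hi0 : (i : ℕ) = 0
      · simp only [if_pos hi0, add_zero]
      · by_cases him : (i : ℕ) = m + 1
        · simp only [if_neg hi0, if_pos him, add_zero]
        · simp only [if_neg hi0, if_neg him]
          ring
    · have hjm : ¬(j : ℕ) = m + 1 := fun h => hj (Fin.ext (by omega))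
      rw [Matrix.updateCol_ne hj]
      simp [hM2, hjm]
  have step3 : M3 = M2.updateRow e (M2 e + (-(t / (b z + t))) • M2 z) := by
    ext i j
    by_cases hi : i = e
    · rw [hi, Matrix.updateRow_self, Pi.add_apply, Pi.smul_apply, smul_eq_mul]
      have h2e : M2 e j = if (j : ℕ) = m + 1 then t + v e
          else if (j : ℕ) = 0 then t else 0 := by
        by_cases hjm : (j : ℕ) = m + 1
        · simp [hM2, hjm, hez0, he]
        · have hje : ¬ j = e := fun h => hjm (by rw [h, he])
          simp [hM2, hM1, hM0, hjm, hez0, he, hje]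
      have h2z : M2 z j = if (j : ℕ) = m + 1 then b e - Sm / t
          else if (j : ℕ) = 0 then b z + t else 0 := by
        by_cases hjm : (j : ℕ) = m + 1
        · simp [hM2, hjm, hz]
        · simp [hM2, hM1, hjm, hz]
      rw [h2e, h2z]
      have hL : M3 e j = if j = e then D else 0 := by simp [hM3, he]
      rw [hL]
      by_cases hjm : (j : ℕ) = m + 1
      · have hje : j = e := Fin.ext (by omega)
        rw [if_pos hje, if_pos hjm, if_pos hjm, hD]
      · have hje : ¬ j = e := fun h => hjm (by rw [h, he])
        rw [if_neg hje]
        by_cases hj0 : (j : ℕ) = 0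
        · simp only [if_neg hjm, if_pos hj0]
          rw [neg_mul, div_mul_cancel₀ _ hbt]
          ring
        · simp only [if_neg hjm, if_neg hj0]
          ring
    · have him : ¬(i : ℕ) = m + 1 := fun h => hi (Fin.ext (by omega))
      rw [Matrix.updateRow_ne hi]
      simp [hM3, him]
  have htri : M3.BlockTriangular id := by
    intro i j hij
    have hij' : (j : ℕ) < (i : ℕ) := hij
    have hji : ¬ j = i := fun h => by subst h; exact lt_irrefl _ hij'
    have him : ¬(i : ℕ) = 0 := by omega
    have hii := i.isLt
    by_cases h1 : (i : ℕ) = m + 1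
    · simp [hM3, h1, hji]
    · have hj2 : ¬(j : ℕ) = m + 1 := by omega
      simp [hM3, hM2, hM1, hM0, h1, hj2, him, hji]
  have hM3z : M3 z z = b z + t := by
    simp [hM3, hM2, hM1, hz1, hz]
  have hM3e : M3 e e = D := by
    simp [hM3, he]
  have hM3mid : ∀ i ∈ (Finset.univ.erase z).erase e, M3 i i = t := by
    intro i hi
    have h1 : i ≠ e := (Finset.mem_erase.1 hi).1
    have h2 : i ≠ z := (Finset.mem_erase.1 (Finset.mem_erase.1 hi).2).1
    have h1' : ¬(i : ℕ) = m + 1 := fun h => h1 (Fin.ext (by omega))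
    have h2' : ¬(i : ℕ) = 0 := fun h => h2 (Fin.ext (by omega))
    simp [hM3, hM2, hM1, hM0, h1', h2']
  have hprod : ∏ i, M3 i i = (b z + t) * (D * t ^ m) := by
    rw [← Finset.mul_prod_erase Finset.univ _ (Finset.mem_univ z), hM3z]
    congr 1
    have hez : e ∈ Finset.univ.erase z := Finset.mem_erase.2 ⟨hze.symm, Finset.mem_univ e⟩
    rw [← Finset.mul_prod_erase _ _ hez, hM3e]
    congr 1
    rw [Finset.prod_congr rfl hM3mid, Finset.prod_const]
    congr 1
    rw [Finset.card_erase_of_mem hez, Finset.card_erase_of_mem (Finset.mem_univ z),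
      Finset.card_univ, Fintype.card_fin]
    omega
  have e1 : M1.det = M0.det := by
    rw [step1]; exact det_updateRow_add_sum M0 z S _ hzS
  have e2 : M2.det = M1.det := by
    rw [step2]; exact det_updateCol_add_sum M1 e S _ heS
  have e3 : M3.det = M2.det := by
    rw [step3]; exact Matrix.det_updateRow_add_smul_self M2 (show e ≠ z from hze.symm) _
  rw [← e1, ← e2, ← e3, Matrix.det_of_upperTriangular htri, hprod, hD]
  field_simp
  ring


theorem det_special_matrix
    (F : Type*) [Field F] (n : ℕ) (hn : 2 ≤ n)
    (a u : Fin n → F)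
    (A : Matrix (Fin n) (Fin n) (Polynomial F))
    (hA : A = Matrix.of fun (i j : Fin n) =>
      if (i : ℕ) = 0 then
        (if (j : ℕ) = 0 then C (a ⟨0, by omega⟩) + X else C (a j))
      else if (i : ℕ) = n - 1 then
        (if (j : ℕ) = 0 then X
         else if j = i then X + C (u ⟨n - 1, by omega⟩) else 0)
      else
        (if j = i then X
         else if (j : ℕ) = n - 1 then C (u i) else 0)) :
    A.det = X ^ n + C (u ⟨n - 1, by omega⟩) * X ^ (n - 1)
      + C (a ⟨0, by omega⟩ - a ⟨n - 1, by omega⟩) * X ^ (n - 1)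
      + C (a ⟨0, by omega⟩ * u ⟨n - 1, by omega⟩) * X ^ (n - 2)
      + C (∑ i ∈ Finset.univ.filter
            (fun i : Fin n => (i : ℕ) ≠ 0 ∧ (i : ℕ) ≠ n - 1), a i * u i)
          * X ^ (n - 2) := by
  obtain ⟨m, rfl⟩ : ∃ m, n = m + 2 := ⟨n - 2, by omega⟩
  subst hA
  have hred1 : m + 2 - 1 = m + 1 := rfl
  have hred2 : m + 2 - 2 = m := rfl
  set φ := algebraMap (Polynomial F) (RatFunc F) with hφdef
  have hφ : Function.Injective φ := IsFractionRing.injective _ _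
  apply hφ
  rw [RingHom.map_det]
  have ht : φ X ≠ 0 := fun h => Polynomial.X_ne_zero (hφ (by rw [h, map_zero]))
  have hbt : φ (C (a ⟨0, by omega⟩)) + φ X ≠ 0 := by
    intro h
    have h2 : (C (a ⟨0, by omega⟩) + X : Polynomial F) ≠ 0 := by
      rw [add_comm]; exact Polynomial.X_add_C_ne_zero _
    exact h2 (hφ (by rw [map_add, map_zero, h]))
  have hmap : (Matrix.of fun (i j : Fin (m + 2)) =>
      if (i : ℕ) = 0 then
        (if (j : ℕ) = 0 then C (a ⟨0, by omega⟩) + X else C (a j))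
      else if (i : ℕ) = m + 2 - 1 then
        (if (j : ℕ) = 0 then X
         else if j = i then X + C (u ⟨m + 2 - 1, by omega⟩) else 0)
      else
        (if j = i then X
         else if (j : ℕ) = m + 2 - 1 then C (u i) else 0)).map φ
      = Matrix.of fun (i j : Fin (m + 2)) =>
          if (i : ℕ) = 0 then
            (if (j : ℕ) = 0 then φ (C (a ⟨0, by omega⟩)) + φ X else φ (C (a j)))
          else if (i : ℕ) = m + 1 then
            (if (j : ℕ) = 0 then φ X
             else if j = i then φ X + φ (C (u ⟨m + 1, by omega⟩)) else 0)
          else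
            (if j = i then φ X
             else if (j : ℕ) = m + 1 then φ (C (u i)) else 0) := by
    ext i j
    simp only [Matrix.map_apply, Matrix.of_apply, hred1]
    split_ifs <;> simp [map_add]
  rw [RingHom.mapMatrix_apply, hmap]
  have key := det_aux m (φ X) (fun i => φ (C (a i))) (fun i => φ (C (u i)))
    ⟨0, by omega⟩ ⟨m + 1, by omega⟩ rfl rfl ht hbt
  refine key.trans ?_
  simp only [hred1, hred2, _root_.map_add, _root_.map_mul, map_pow, map_sub, map_sum]
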